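/- Let X be a topological space with a weak base ⋃_{x∈X} B(x), i.e.: (i) x ∈ B for all B ∈ B(x); (ii) for all B₁, B₂ ∈ B(x) there is B ∈ B(x) with B ⊆ B₁ ∩ B₂; (iii) a set U ⊆ X is open if and only if for each x ∈ U, U contains an element of B(x). Suppose X is weakly locally countable (each B(x) contains a countable set) and weakly regular (for all distinct x, y ∈ X there are disjoint B_x ∈ B(x) and B_y ∈ B(y), and every member of every B(x) is closed in X). Then X is Hausdorff. -/
import Mathlib

open Topology Set

noncomputable section WeakBaseAux

variable {X : Type*} [TopologicalSpace X]

open Classical in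
/-- Choice of a countable closed weak-base member at `z` avoiding `C`. -/
def wbPick (B : X → Set (Set X)) (z : X) (C : Set X) : Set X :=
  if h : ∃ b, b ∈ B z ∧ b.Countable ∧ IsClosed b ∧ z ∈ b ∧ Disjoint b C then h.choose else ∅

lemma wbPick_spec {B : X → Set (Set X)} {z : X} {C : Set X}
    (h : ∃ b, b ∈ B z ∧ b.Countable ∧ IsClosed b ∧ z ∈ b ∧ Disjoint b C) :
    wbPick B z C ∈ B z ∧ (wbPick B z C).Countable ∧ IsClosed (wbPick B z C) ∧
      z ∈ wbPick B z C ∧ Disjoint (wbPick B z C) C := by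
  classical
  rw [wbPick]
  rw [dif_pos h]
  exact h.choose_spec

open Classical in
/-- Choice of an enumeration of a countable nonempty set. -/
def wbEnum (x₀ : X) (b : Set X) : ℕ → X :=
  if h : ∃ f : ℕ → X, b = Set.range f then h.choose else fun _ => x₀

lemma wbEnum_spec (x₀ : X) {b : Set X} (hc : b.Countable) (hne : b.Nonempty) :
    b = Set.range (wbEnum x₀ b) := by
  classical
  have h : ∃ f : ℕ → X, b = Set.range f := hc.exists_eq_range hne
  rw [wbEnum, dif_pos h]
  exact h.choose_spec

lemma wbEnum_mem (x₀ : X) {b : Set X} (hc : b.Countable) (hne : b.Nonempty) (j : ℕ) :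
    wbEnum x₀ b j ∈ b := by
  have h : wbEnum x₀ b j ∈ Set.range (wbEnum x₀ b) := Set.mem_range_self j
  rwa [← wbEnum_spec x₀ hc hne] at h

lemma wbEnum_surj (x₀ : X) {b : Set X} (hc : b.Countable) (hne : b.Nonempty) {z : X}
    (hz : z ∈ b) : ∃ j, wbEnum x₀ b j = z := by
  rw [wbEnum_spec x₀ hc hne] at hz
  exact hz

/-- Decode a natural number into (side, index, element-index), ignoring a padding component. -/
def wbDecode (n : ℕ) : ℕ × ℕ × ℕ :=
  ((Nat.unpair (Nat.unpair n).2).1,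
    (Nat.unpair (Nat.unpair (Nat.unpair n).2).2).1,
    (Nat.unpair (Nat.unpair (Nat.unpair n).2).2).2)

lemma wbDecode_pair (t s i j : ℕ) : wbDecode (Nat.pair t (Nat.pair s (Nat.pair i j))) = (s, i, j) := by
  simp [wbDecode]

lemma le_wbEncode (t m : ℕ) : t ≤ Nat.pair t m := Nat.left_le_pair t m

variable (B : X → Set (Set X)) (x₀ : X)

/-- One step of the back-and-forth construction. -/
def wbStep (n : ℕ) (st : List (Set X) × List (Set X)) : List (Set X) × List (Set X) :=
  if (wbDecode n).1 = 0 then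
    if h : (wbDecode n).2.1 < st.1.length then
      (st.1 ++ [wbPick B (wbEnum x₀ (st.1[(wbDecode n).2.1]'h) (wbDecode n).2.2)
        (⋃ c ∈ st.2, c)], st.2)
    else st
  else
    if h : (wbDecode n).2.1 < st.2.length then
      (st.1, st.2 ++ [wbPick B (wbEnum x₀ (st.2[(wbDecode n).2.1]'h) (wbDecode n).2.2)
        (⋃ c ∈ st.1, c)])
    else st

variable (init : List (Set X) × List (Set X))

def wbSeq : ℕ → List (Set X) × List (Set X)
  | 0 => init
  | n + 1 => wbStep B x₀ n (wbSeq n)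

lemma wbStep_prefix (n : ℕ) (st : List (Set X) × List (Set X)) :
    st.1 <+: (wbStep B x₀ n st).1 ∧ st.2 <+: (wbStep B x₀ n st).2 := by
  unfold wbStep
  split <;> [skip; skip] <;> split <;>
    simp [List.prefix_append, List.prefix_refl]

lemma wbSeq_prefix {m n : ℕ} (h : m ≤ n) :
    (wbSeq B x₀ init m).1 <+: (wbSeq B x₀ init n).1 ∧
      (wbSeq B x₀ init m).2 <+: (wbSeq B x₀ init n).2 := by
  induction n, h using Nat.le_induction with
  | base => exact ⟨List.prefix_refl _, List.prefix_refl _⟩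
  | succ n hmn ih =>
    have hs := wbStep_prefix B x₀ n (wbSeq B x₀ init n)
    exact ⟨ih.1.trans hs.1, ih.2.trans hs.2⟩

/-- The invariant maintained through the construction. -/
def wbInv (st : List (Set X) × List (Set X)) : Prop :=
  (∀ b ∈ st.1, b.Countable ∧ b.Nonempty ∧ IsClosed b) ∧
  (∀ c ∈ st.2, c.Countable ∧ c.Nonempty ∧ IsClosed c) ∧
  (∀ b ∈ st.1, ∀ c ∈ st.2, Disjoint b c)

lemma wbListUnion_closed {l : List (Set X)} (h : ∀ c ∈ l, IsClosed c) :
    IsClosed (⋃ c ∈ l, c) := Set.Finite.isClosed_biUnion l.finite_toSet h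

lemma wbKey_ex
    (key : ∀ (z : X) (C : Set X), IsClosed C → z ∉ C →
      ∃ b, b ∈ B z ∧ b.Countable ∧ IsClosed b ∧ z ∈ b ∧ Disjoint b C)
    {st : List (Set X) × List (Set X)} (hinv : wbInv st)
    {i : ℕ} (hi : i < st.1.length) (j : ℕ) :
    ∃ b, b ∈ B (wbEnum x₀ (st.1[i]'hi) j) ∧ b.Countable ∧ IsClosed b ∧
      wbEnum x₀ (st.1[i]'hi) j ∈ b ∧ Disjoint b (⋃ c ∈ st.2, c) := by
  set b₀ := st.1[i]'hi with hb₀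
  have hb₀mem : b₀ ∈ st.1 := List.getElem_mem hi
  obtain ⟨hc, hne, -⟩ := hinv.1 b₀ hb₀mem
  set z := wbEnum x₀ b₀ j with hz
  have hzb : z ∈ b₀ := wbEnum_mem x₀ hc hne j
  have hCclosed : IsClosed (⋃ c ∈ st.2, c) :=
    wbListUnion_closed (fun c hc => (hinv.2.1 c hc).2.2)
  have hzC : z ∉ ⋃ c ∈ st.2, c := by
    simp only [Set.mem_iUnion, not_exists]
    intro c hcmem hzc
    exact (hinv.2.2 b₀ hb₀mem c hcmem).ne_of_mem hzb hzc rfl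
  exact key z _ hCclosed hzC

lemma wbKey_ex₂
    (key : ∀ (z : X) (C : Set X), IsClosed C → z ∉ C →
      ∃ b, b ∈ B z ∧ b.Countable ∧ IsClosed b ∧ z ∈ b ∧ Disjoint b C)
    {st : List (Set X) × List (Set X)} (hinv : wbInv st)
    {i : ℕ} (hi : i < st.2.length) (j : ℕ) :
    ∃ b, b ∈ B (wbEnum x₀ (st.2[i]'hi) j) ∧ b.Countable ∧ IsClosed b ∧
      wbEnum x₀ (st.2[i]'hi) j ∈ b ∧ Disjoint b (⋃ c ∈ st.1, c) := by
  set b₀ := st.2[i]'hi with hb₀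
  have hb₀mem : b₀ ∈ st.2 := List.getElem_mem hi
  obtain ⟨hc, hne, -⟩ := hinv.2.1 b₀ hb₀mem
  set z := wbEnum x₀ b₀ j with hz
  have hzb : z ∈ b₀ := wbEnum_mem x₀ hc hne j
  have hCclosed : IsClosed (⋃ c ∈ st.1, c) :=
    wbListUnion_closed (fun c hc => (hinv.1 c hc).2.2)
  have hzC : z ∉ ⋃ c ∈ st.1, c := by
    simp only [Set.mem_iUnion, not_exists]
    intro c hcmem hzc
    exact (hinv.2.2 c hcmem b₀ hb₀mem).ne_of_mem hzc hzb rfl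
  exact key z _ hCclosed hzC

lemma wbStep_inv
    (key : ∀ (z : X) (C : Set X), IsClosed C → z ∉ C →
      ∃ b, b ∈ B z ∧ b.Countable ∧ IsClosed b ∧ z ∈ b ∧ Disjoint b C)
    (n : ℕ) {st : List (Set X) × List (Set X)} (hinv : wbInv st) :
    wbInv (wbStep B x₀ n st) := by
  unfold wbStep
  split
  · split
    · rename_i h0 hi
      obtain ex := wbKey_ex B x₀ key hinv hi (wbDecode n).2.2
      obtain ⟨hmem, hc, hcl, hz, hdisj⟩ := wbPick_spec ex
      refine ⟨?_, hinv.2.1, ?_⟩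
      · intro b hb
        rcases List.mem_append.1 hb with hb | hb
        · exact hinv.1 b hb
        · simp only [List.mem_singleton] at hb
          subst hb; exact ⟨hc, ⟨_, hz⟩, hcl⟩
      · intro b hb c hcmem
        rcases List.mem_append.1 hb with hb | hb
        · exact hinv.2.2 b hb c hcmem
        · simp only [List.mem_singleton] at hb
          subst hb
          exact hdisj.mono_right (Set.subset_iUnion₂ (s := fun (c : Set X) (_ : c ∈ st.2) => c) c hcmem)
    · exact hinv
  · split
    · rename_i h0 hi
      obtain ex := wbKey_ex₂ B x₀ key hinv hi (wbDecode n).2.2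
      obtain ⟨hmem, hc, hcl, hz, hdisj⟩ := wbPick_spec ex
      refine ⟨hinv.1, ?_, ?_⟩
      · intro b hb
        rcases List.mem_append.1 hb with hb | hb
        · exact hinv.2.1 b hb
        · simp only [List.mem_singleton] at hb
          subst hb; exact ⟨hc, ⟨_, hz⟩, hcl⟩
      · intro b hb c hcmem
        rcases List.mem_append.1 hcmem with hcmem | hcmem
        · exact hinv.2.2 b hb c hcmem
        · simp only [List.mem_singleton] at hcmem
          subst hcmem
          exact (hdisj.mono_right (Set.subset_iUnion₂ (s := fun (b : Set X) (_ : b ∈ st.1) => b) b hb)).symm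
    · exact hinv

lemma wbSeq_inv
    (key : ∀ (z : X) (C : Set X), IsClosed C → z ∉ C →
      ∃ b, b ∈ B z ∧ b.Countable ∧ IsClosed b ∧ z ∈ b ∧ Disjoint b C)
    (hinit : wbInv init) (n : ℕ) : wbInv (wbSeq B x₀ init n) := by
  induction n with
  | zero => exact hinit
  | succ n ih => exact wbStep_inv B x₀ key n ih

end WeakBaseAux

theorem stmt12 {X : Type*} [TopologicalSpace X] (B : X → Set (Set X))
    (h_mem : ∀ x : X, ∀ b ∈ B x, x ∈ b)
    (h_inter : ∀ x : X, ∀ b₁ ∈ B x, ∀ b₂ ∈ B x, ∃ b ∈ B x, b ⊆ b₁ ∩ b₂)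
    (h_open : ∀ U : Set X, IsOpen U ↔ ∀ x ∈ U, ∃ b ∈ B x, b ⊆ U)
    (h_count : ∀ x : X, ∃ b ∈ B x, b.Countable)
    (h_sep : ∀ x y : X, x ≠ y → ∃ bx ∈ B x, ∃ by' ∈ B y, Disjoint bx by')
    (h_closed : ∀ x : X, ∀ b ∈ B x, IsClosed b) :
    T2Space X := by
  classical
  constructor
  intro x y hxy
  -- Key: for any point `z` outside a closed set `C`, there is a countable closed
  -- weak-base member at `z` avoiding `C`.
  have key : ∀ (z : X) (C : Set X), IsClosed C → z ∉ C →
      ∃ b, b ∈ B z ∧ b.Countable ∧ IsClosed b ∧ z ∈ b ∧ Disjoint b C := by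
    intro z C hC hzC
    obtain ⟨b₁, hb₁, hb₁sub⟩ := (h_open Cᶜ).1 hC.isOpen_compl z hzC
    obtain ⟨b₂, hb₂, hb₂c⟩ := h_count z
    obtain ⟨b, hb, hbsub⟩ := h_inter z b₁ hb₁ b₂ hb₂
    refine ⟨b, hb, hb₂c.mono (hbsub.trans Set.inter_subset_right), h_closed z b hb,
      h_mem z b hb, Set.disjoint_left.2 fun a hab haC => hb₁sub (hbsub hab).1 haC⟩
  -- initial disjoint countable closed weak-base members at `x` and `y`
  obtain ⟨bx0, hbx0, by0, hby0, hdisj0⟩ := h_sep x y hxy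
  obtain ⟨cx, hcx, hcxc⟩ := h_count x
  obtain ⟨bx, hbx, hbxsub⟩ := h_inter x bx0 hbx0 cx hcx
  obtain ⟨cy, hcy, hcyc⟩ := h_count y
  obtain ⟨by1, hby1, hby1sub⟩ := h_inter y by0 hby0 cy hcy
  have hbxc : bx.Countable := hcxc.mono (hbxsub.trans Set.inter_subset_right)
  have hby1c : by1.Countable := hcyc.mono (hby1sub.trans Set.inter_subset_right)
  have hxbx : x ∈ bx := h_mem x bx hbx
  have hyby : y ∈ by1 := h_mem y by1 hby1
  have hdisj1 : Disjoint bx by1 :=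
    hdisj0.mono (hbxsub.trans Set.inter_subset_left) (hby1sub.trans Set.inter_subset_left)
  set init : List (Set X) × List (Set X) := ([bx], [by1]) with hinit_def
  have hinit : wbInv init := by
    refine ⟨?_, ?_, ?_⟩
    · intro b hb
      simp only [hinit_def, List.mem_singleton] at hb
      rw [hb]
      exact ⟨hbxc, ⟨x, hxbx⟩, h_closed x bx hbx⟩
    · intro c hc
      simp only [hinit_def, List.mem_singleton] at hc
      rw [hc]
      exact ⟨hby1c, ⟨y, hyby⟩, h_closed y by1 hby1⟩
    · intro b hb c hc
      simp only [hinit_def, List.mem_singleton] at hb hc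
      rw [hb, hc]
      exact hdisj1
  set S := wbSeq B x init with hS_def
  have hinv : ∀ n, wbInv (S n) := wbSeq_inv B x init key hinit
  have hpre : ∀ {m n : ℕ}, m ≤ n → (S m).1 <+: (S n).1 ∧ (S m).2 <+: (S n).2 :=
    fun h => wbSeq_prefix B x init h
  set U : Set X := ⋃ n, ⋃ b ∈ (S n).1, b with hU_def
  set V : Set X := ⋃ n, ⋃ c ∈ (S n).2, c with hV_def
  have hmemU : ∀ {z : X}, z ∈ U ↔ ∃ n, ∃ b ∈ (S n).1, z ∈ b := by
    intro z; simp [hU_def, Set.mem_iUnion]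
  have hmemV : ∀ {z : X}, z ∈ V ↔ ∃ n, ∃ c ∈ (S n).2, z ∈ c := by
    intro z; simp [hV_def, Set.mem_iUnion]
  refine ⟨U, V, ?_, ?_, ?_, ?_, ?_⟩
  · -- U is open
    rw [h_open]
    intro z hz
    obtain ⟨n, b, hbmem, hzb⟩ := hmemU.1 hz
    obtain ⟨i, hi, hib⟩ := List.mem_iff_getElem.1 hbmem
    obtain ⟨hc, hne, -⟩ := (hinv n).1 b hbmem
    obtain ⟨j, hjz⟩ := wbEnum_surj x hc hne hzb
    set m := Nat.pair n (Nat.pair 0 (Nat.pair i j)) with hm_def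
    have hnm : n ≤ m := Nat.left_le_pair _ _
    have hprem := (hpre hnm).1
    have him : i < (S m).1.length := hi.trans_le hprem.length_le
    have hgm : (S m).1[i]'him = b := by rw [← hprem.getElem hi, hib]
    have hdec : wbDecode m = (0, i, j) := wbDecode_pair n 0 i j
    have hstep : (S (m + 1)).1 =
        (S m).1 ++ [wbPick B (wbEnum x ((S m).1[i]'him) j) (⋃ c ∈ (S m).2, c)] := by
      show (wbStep B x m (S m)).1 = _
      rw [wbStep, hdec]
      rw [if_pos rfl, dif_pos him]
    have ex := wbKey_ex B x key (hinv m) him j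
    rw [hgm, hjz] at ex hstep
    obtain ⟨hpmem, -, -, -, -⟩ := wbPick_spec ex
    refine ⟨wbPick B z (⋃ c ∈ (S m).2, c), hpmem, fun a ha => ?_⟩
    exact hmemU.2 ⟨m + 1, wbPick B z (⋃ c ∈ (S m).2, c), by rw [hstep]; simp, ha⟩
  · -- V is open
    rw [h_open]
    intro z hz
    obtain ⟨n, b, hbmem, hzb⟩ := hmemV.1 hz
    obtain ⟨i, hi, hib⟩ := List.mem_iff_getElem.1 hbmem
    obtain ⟨hc, hne, -⟩ := (hinv n).2.1 b hbmem
    obtain ⟨j, hjz⟩ := wbEnum_surj x hc hne hzb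
    set m := Nat.pair n (Nat.pair 1 (Nat.pair i j)) with hm_def
    have hnm : n ≤ m := Nat.left_le_pair _ _
    have hprem := (hpre hnm).2
    have him : i < (S m).2.length := hi.trans_le hprem.length_le
    have hgm : (S m).2[i]'him = b := by rw [← hprem.getElem hi, hib]
    have hdec : wbDecode m = (1, i, j) := wbDecode_pair n 1 i j
    have hstep : (S (m + 1)).2 =
        (S m).2 ++ [wbPick B (wbEnum x ((S m).2[i]'him) j) (⋃ c ∈ (S m).1, c)] := by
      show (wbStep B x m (S m)).2 = _
      rw [wbStep, hdec]
      rw [if_neg (by simp), dif_pos him]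
    have ex := wbKey_ex₂ B x key (hinv m) him j
    rw [hgm, hjz] at ex hstep
    obtain ⟨hpmem, -, -, -, -⟩ := wbPick_spec ex
    refine ⟨wbPick B z (⋃ c ∈ (S m).1, c), hpmem, fun a ha => ?_⟩
    exact hmemV.2 ⟨m + 1, wbPick B z (⋃ c ∈ (S m).1, c), by rw [hstep]; simp, ha⟩
  · -- x ∈ U
    exact hmemU.2 ⟨0, bx, by simp [hS_def, wbSeq, hinit_def], hxbx⟩
  · -- y ∈ V
    exact hmemV.2 ⟨0, by1, by simp [hS_def, wbSeq, hinit_def], hyby⟩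
  · -- disjoint
    rw [Set.disjoint_left]
    intro a haU haV
    obtain ⟨n, b, hbmem, hab⟩ := hmemU.1 haU
    obtain ⟨n', c, hcmem, hac⟩ := hmemV.1 haV
    have h1 : b ∈ (S (max n n')).1 := (hpre (le_max_left n n')).1.subset hbmem
    have h2 : c ∈ (S (max n n')).2 := (hpre (le_max_right n n')).2.subset hcmem
    exact ((hinv (max n n')).2.2 b h1 c h2).ne_of_mem hab hac rfl
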